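/- Let (α_n) be a decreasing positive sequence with α_n → 0, and let A = {α_n e_n : n ∈ ℕ} ⊂ ℓ_p for p ∈ [1,∞] (with p = ∞ meaning c₀). Then d_B(A − A; ℓ_p) = 2 d_B(A; ℓ_p). -/

import Mathlib

open Filter Metric Set Pointwise Topology ENNReal

/-- `coverNum X ε` : minimal number of balls of radius `ε` with centres in `X` covering `X`. -/
noncomputable def coverNum {E : Type*} [SeminormedAddCommGroup E] (X : Set E) (ε : ℝ) : ℕ∞ :=
  sInf {n : ℕ∞ | ∃ F : Finset E, ↑F ⊆ X ∧ (X ⊆ ⋃ c ∈ F, Metric.ball c ε) ∧ n = F.card}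

/-- extended logarithm of an extended natural number. -/
noncomputable def elog (n : ℕ∞) : EReal :=
  if n = ⊤ then ⊤ else ((Real.log n.toNat : ℝ) : EReal)

/-- The upper box-counting dimension `d_B(X) = limsup_{ε → 0⁺} log N(X,ε) / (-log ε)`. -/
noncomputable def dimBox {E : Type*} [SeminormedAddCommGroup E] (X : Set E) : EReal :=
  Filter.limsup (fun ε : ℝ => elog (coverNum X ε) / ((-Real.log ε : ℝ) : EReal)) (𝓝[>] 0)

/-- `thickNum X ε` : smallest dimension of a finite-dimensional subspace `V` with
`dist(x, V) ≤ ε` for all `x ∈ X` (`⊤` if none exists). -/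
noncomputable def thickNum {E : Type*} [NormedAddCommGroup E] [NormedSpace ℝ E]
    (X : Set E) (ε : ℝ) : ℕ∞ :=
  sInf {n : ℕ∞ | ∃ V : Submodule ℝ E, FiniteDimensional ℝ V ∧ n = Module.finrank ℝ V ∧
    ∀ x ∈ X, Metric.infDist x (V : Set E) ≤ ε}

/-- The thickness exponent `τ(X) = limsup_{ε → 0⁺} log d(X,ε) / (-log ε)`. -/
noncomputable def thickness {E : Type*} [NormedAddCommGroup E] [NormedSpace ℝ E]
    (X : Set E) : EReal :=
  Filter.limsup (fun ε : ℝ => elog (thickNum X ε) / ((-Real.log ε : ℝ) : EReal)) (𝓝[>] 0)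

/-- `dualThickNum X θ ε` : minimal dimension of a subspace `U ⊆ E*` such that for all
`x, y ∈ X` with `‖x - y‖ ≥ ε` some `φ ∈ U` has `|φ(x-y)| ≥ ε^(1+θ)`. -/
noncomputable def dualThickNum {E : Type*} [NormedAddCommGroup E] [NormedSpace ℝ E]
    (X : Set E) (θ ε : ℝ) : ℕ∞ :=
  sInf {n : ℕ∞ | ∃ U : Submodule ℝ (E →L[ℝ] ℝ), FiniteDimensional ℝ U ∧ n = Module.finrank ℝ U ∧
    ∀ x ∈ X, ∀ y ∈ X, ε ≤ ‖x - y‖ → ∃ φ ∈ U, ε ^ (1 + θ) ≤ |φ (x - y)|}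

noncomputable def dualThickTheta {E : Type*} [NormedAddCommGroup E] [NormedSpace ℝ E]
    (X : Set E) (θ : ℝ) : EReal :=
  Filter.limsup (fun ε : ℝ => elog (dualThickNum X θ ε) / ((-Real.log ε : ℝ) : EReal)) (𝓝[>] 0)

/-- The dual thickness `τ*(X) = lim_{θ → 0⁺} τ*_θ(X)` (the limit exists by monotonicity and
equals the limsup as `θ → 0⁺`). -/
noncomputable def dualThickness {E : Type*} [NormedAddCommGroup E] [NormedSpace ℝ E]
    (X : Set E) : EReal :=
  Filter.limsup (fun θ : ℝ => dualThickTheta X θ) (𝓝[>] 0)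

/-- `sigmaNum X α ε` : minimal dimension of a subspace `V ⊆ E*` such that whenever
`x, y ∈ X` with `‖x - y‖ ≥ ε` there is `Φ ∈ V` with `‖Φ‖ = 1` and `|Φ(x-y)| ≥ α ε`. -/
noncomputable def sigmaNum {E : Type*} [NormedAddCommGroup E] [NormedSpace ℝ E]
    (X : Set E) (α ε : ℝ) : ℕ∞ :=
  sInf {n : ℕ∞ | ∃ V : Submodule ℝ (E →L[ℝ] ℝ), FiniteDimensional ℝ V ∧ n = Module.finrank ℝ V ∧
    ∀ x ∈ X, ∀ y ∈ X, ε ≤ ‖x - y‖ → ∃ Φ ∈ V, ‖Φ‖ = 1 ∧ α * ε ≤ |Φ (x - y)|}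

noncomputable def sigmaExp {E : Type*} [NormedAddCommGroup E] [NormedSpace ℝ E]
    (X : Set E) (α : ℝ) : EReal :=
  Filter.limsup (fun ε : ℝ => elog (sigmaNum X α ε) / ((-Real.log ε : ℝ) : EReal)) (𝓝[>] 0)

section AuxCover

open Filter Metric Set

variable {E : Type*} [SeminormedAddCommGroup E]

lemma coverNum_le_card {X : Set E} {ε : ℝ} (F : Finset E) (h1 : ↑F ⊆ X)
    (h2 : X ⊆ ⋃ c ∈ F, Metric.ball c ε) : coverNum X ε ≤ F.card :=
  sInf_le ⟨F, h1, h2, rfl⟩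

lemma card_le_coverNum {X : Set E} {ε : ℝ} (S : Finset E) (hS : ↑S ⊆ X)
    (hsep : ∀ x ∈ S, ∀ y ∈ S, x ≠ y → 2 * ε ≤ dist x y) :
    (S.card : ℕ∞) ≤ coverNum X ε := by
  classical
  refine le_sInf ?_
  rintro n ⟨F, hF, hcov, rfl⟩
  rw [Nat.cast_le]
  by_contra hlt
  push_neg at hlt
  have key : ∀ x : E, x ∈ S → ∃ c, c ∈ F ∧ dist x c < ε := by
    intro x hx
    have hx' := hcov (hS hx)
    rw [Set.mem_iUnion₂] at hx'
    obtain ⟨c, hc, hball⟩ := hx'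
    exact ⟨c, hc, by simpa [Metric.mem_ball] using hball⟩
  set f : E → E := fun x => if hx : x ∈ S then (key x hx).choose else x with hf
  have hmaps : ∀ x ∈ S, f x ∈ F := by
    intro x hx
    simp only [hf, dif_pos hx]
    exact ((key x hx).choose_spec).1
  have hdist : ∀ x ∈ S, dist x (f x) < ε := by
    intro x hx
    simp only [hf, dif_pos hx]
    exact ((key x hx).choose_spec).2
  obtain ⟨x, hx, y, hy, hne, heq⟩ := Finset.exists_ne_map_eq_of_card_lt_of_maps_to hlt hmaps
  have h1 := hsep x hx y hy hne
  have h2 : dist x y ≤ dist x (f x) + dist y (f y) := by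
    calc dist x y ≤ dist x (f x) + dist y (f x) := dist_triangle_right x y (f x)
    _ = dist x (f x) + dist y (f y) := by rw [heq]
  have := hdist x hx
  have := hdist y hy
  linarith

lemma one_le_coverNum {X : Set E} (hX : X.Nonempty) (ε : ℝ) : 1 ≤ coverNum X ε := by
  refine le_sInf ?_
  rintro n ⟨F, hF, hcov, rfl⟩
  obtain ⟨x, hx⟩ := hX
  have hx' := hcov hx
  rw [Set.mem_iUnion₂] at hx'
  obtain ⟨c, hc, _⟩ := hx'
  have : 0 < F.card := Finset.card_pos.2 ⟨c, hc⟩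
  exact_mod_cast this

end AuxCover

section AuxElog

lemma elog_coe_nat (k : ℕ) : elog (k : ℕ∞) = ((Real.log k : ℝ) : EReal) := by
  rw [elog, if_neg (by exact_mod_cast WithTop.coe_ne_top)]
  simp

lemma elog_mono : Monotone elog := by
  intro a b hab
  rcases eq_or_ne b ⊤ with rfl | hb
  · simp [elog]
  rcases eq_or_ne a ⊤ with rfl | ha
  · exact absurd (top_le_iff.1 hab) hb
  simp only [elog, if_neg ha, if_neg hb]
  rcases Nat.eq_zero_or_pos a.toNat with h0 | h0
  · rw [h0, Nat.cast_zero, Real.log_zero]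
    exact_mod_cast Real.log_natCast_nonneg _
  · exact EReal.coe_le_coe_iff.2 (Real.log_le_log (by exact_mod_cast h0)
      (by exact_mod_cast ENat.toNat_le_toNat hab hb))

lemma elog_nonneg {n : ℕ∞} (h : 1 ≤ n) : 0 ≤ elog n := by
  have := elog_mono h
  rwa [show ((1 : ℕ∞)) = ((1 : ℕ) : ℕ∞) by norm_cast, elog_coe_nat, Nat.cast_one,
    Real.log_one, EReal.coe_zero] at this

end AuxElog
section AuxLp

open Filter

lemma norm_lp_single (p : ℝ≥0∞) [Fact (1 ≤ p)] (n : ℕ) (a : ℝ) :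
    ‖(lp.single p n a : lp (fun _ : ℕ => ℝ) p)‖ = |a| := by
  rcases eq_or_ne p ⊤ with rfl | hp
  · refine le_antisymm (lp.norm_le_of_forall_le (abs_nonneg a) fun i => ?_) ?_
    · rcases eq_or_ne i n with rfl | hi
      · rw [lp.single_apply_self]; exact le_of_eq (Real.norm_eq_abs a)
      · rw [lp.single_apply_ne _ _ _ hi]; simpa using abs_nonneg a
    · have := lp.norm_apply_le_norm (by simp : (⊤ : ℝ≥0∞) ≠ 0)
        (lp.single ⊤ n a : lp (fun _ : ℕ => ℝ) ⊤) n
      rwa [lp.single_apply_self, Real.norm_eq_abs] at this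
  · have hp0 : 0 < p.toReal := by
      refine ENNReal.toReal_pos (fun h => ?_) hp
      have := Fact.out (p := 1 ≤ p); rw [h] at this; simp at this
    have := lp.norm_single (E := fun _ : ℕ => ℝ) (ENNReal.toReal_pos_iff.1 hp0).1 n a
    rwa [Real.norm_eq_abs] at this

lemma abs_apply_le_dist (p : ℝ≥0∞) [Fact (1 ≤ p)] (x y : lp (fun _ : ℕ => ℝ) p) (k : ℕ) :
    |x k - y k| ≤ dist x y := by
  have hp0 : p ≠ 0 := by
    have := Fact.out (p := 1 ≤ p); intro h; rw [h] at this; simp at this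
  have := lp.norm_apply_le_norm hp0 (x - y) k
  rwa [lp.coeFn_sub, Pi.sub_apply, Real.norm_eq_abs, ← dist_eq_norm] at this

end AuxLp

section AuxMf

open Filter

lemma mf_lt (α : ℕ → ℝ) (hlim : Filter.Tendsto α Filter.atTop (nhds 0)) {ε : ℝ} (hε : 0 < ε) :
    α (sInf {m | α m < ε}) < ε :=
  Nat.sInf_mem ((hlim.eventually_lt_const hε).exists)

lemma mf_ge (α : ℕ → ℝ) {ε : ℝ} {n : ℕ} (hn : n < sInf {m | α m < ε}) : ε ≤ α n :=
  not_lt.1 (Nat.notMem_of_lt_sInf hn)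

end AuxMf
section AuxCount

open Filter Metric Set Pointwise

variable {p : ℝ≥0∞} [Fact (1 ≤ p)] {α : ℕ → ℝ}

private lemma eseq_coord (n m k : ℕ) :
    (((lp.single p n (α n) - lp.single p m (α m) : lp (fun _ : ℕ => ℝ) p)) : ∀ _ : ℕ, ℝ) k
      = (if k = n then α n else 0) - (if k = m then α m else 0) := by
  rw [lp.coeFn_sub, Pi.sub_apply]
  congr 1
  · rcases eq_or_ne k n with rfl | h
    · rw [lp.single_apply_self, if_pos rfl]
    · rw [lp.single_apply_ne _ _ _ h, if_neg h]
  · rcases eq_or_ne k m with rfl | h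
    · rw [lp.single_apply_self, if_pos rfl]
    · rw [lp.single_apply_ne _ _ _ h, if_neg h]

omit [Fact (1 ≤ p)] in
private lemma eseq_coord_self (n k : ℕ) :
    ((lp.single p n (α n) : lp (fun _ : ℕ => ℝ) p) : ∀ _ : ℕ, ℝ) k = if k = n then α n else 0 := by
  rcases eq_or_ne k n with rfl | h
  · rw [lp.single_apply_self, if_pos rfl]
  · rw [lp.single_apply_ne _ _ _ h, if_neg h]

lemma coverA_upper (hpos : ∀ n, 0 < α n) (hdec : Antitone α)
    (hlim : Tendsto α atTop (nhds 0)) {ε : ℝ} (hε : 0 < ε) :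
    coverNum (Set.range fun n : ℕ => (lp.single p n (α n) : lp (fun _ : ℕ => ℝ) p)) ε
      ≤ ((sInf {m | α m < ε / 2} + 1 : ℕ) : ℕ∞) := by
  classical
  set e : ℕ → lp (fun _ : ℕ => ℝ) p := fun n => lp.single p n (α n) with he
  set m₀ : ℕ := sInf {m | α m < ε / 2} with hm₀
  have hα₀ : α m₀ < ε / 2 := mf_lt α hlim (by linarith)
  set F : Finset (lp (fun _ : ℕ => ℝ) p) := (Finset.range (m₀ + 1)).image e with hF
  have h1 : ↑F ⊆ Set.range e := by
    intro x hx
    rw [hF, Finset.coe_image] at hx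
    obtain ⟨n, _, rfl⟩ := hx
    exact ⟨n, rfl⟩
  have h2 : Set.range e ⊆ ⋃ c ∈ F, Metric.ball c ε := by
    rintro x ⟨n, rfl⟩
    rw [Set.mem_iUnion₂]
    rcases le_or_gt n m₀ with hn | hn
    · exact ⟨e n, Finset.mem_image_of_mem e (Finset.mem_range.2 (by omega)),
        by simpa [Metric.mem_ball] using hε⟩
    · refine ⟨e m₀, Finset.mem_image_of_mem e (Finset.mem_range.2 (by omega)), ?_⟩
      rw [Metric.mem_ball, dist_eq_norm]
      have hle : ‖e n - e m₀‖ ≤ ‖e n‖ + ‖e m₀‖ := norm_sub_le _ _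
      rw [he] at hle
      simp only [norm_lp_single, abs_of_pos (hpos _)] at hle
      have : α n ≤ α m₀ := hdec hn.le
      calc ‖e n - e m₀‖ ≤ α n + α m₀ := hle
        _ < ε := by linarith
  refine (coverNum_le_card F h1 h2).trans ?_
  have : F.card ≤ m₀ + 1 := (Finset.card_image_le).trans (by simp)
  exact_mod_cast this

lemma coverA_lower (hpos : ∀ n, 0 < α n) {ε : ℝ} :
    ((sInf {m | α m < 2 * ε} : ℕ) : ℕ∞)
      ≤ coverNum (Set.range fun n : ℕ => (lp.single p n (α n) : lp (fun _ : ℕ => ℝ) p)) ε := by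
  classical
  set e : ℕ → lp (fun _ : ℕ => ℝ) p := fun n => lp.single p n (α n) with he
  set m₁ : ℕ := sInf {m | α m < 2 * ε} with hm₁
  have hinj : Function.Injective e := by
    intro n n' h
    by_contra hne
    have := congrArg (fun x : lp (fun _ : ℕ => ℝ) p => x n) h
    simp only [he] at this
    rw [eseq_coord_self, eseq_coord_self, if_pos rfl, if_neg hne] at this
    exact (hpos n).ne' this
  set S : Finset (lp (fun _ : ℕ => ℝ) p) := (Finset.range m₁).image e with hS
  have hsub : ↑S ⊆ Set.range e := by
    intro x hx
    rw [hS, Finset.coe_image] at hx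
    obtain ⟨n, _, rfl⟩ := hx
    exact ⟨n, rfl⟩
  have hsep : ∀ x ∈ S, ∀ y ∈ S, x ≠ y → 2 * ε ≤ dist x y := by
    intro x hx y hy hxy
    rw [hS, Finset.mem_image] at hx hy
    obtain ⟨n, hn, rfl⟩ := hx
    obtain ⟨n', hn', rfl⟩ := hy
    have hne : n ≠ n' := fun h => hxy (by rw [h])
    have hco := abs_apply_le_dist p (e n) (e n') n
    have : (e n) n - (e n') n = α n := by
      rw [he, eseq_coord_self, eseq_coord_self, if_pos rfl, if_neg hne]; ring
    rw [show (e n) n - (e n') n = (e n : ∀ _ : ℕ, ℝ) n - (e n' : ∀ _ : ℕ, ℝ) n from rfl] at this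
    rw [this, abs_of_pos (hpos n)] at hco
    exact le_trans (mf_ge α (Finset.mem_range.1 hn)) hco
  have hcard : S.card = m₁ := by
    rw [hS, Finset.card_image_of_injective _ hinj, Finset.card_range]
  calc ((m₁ : ℕ) : ℕ∞) = (S.card : ℕ∞) := by rw [hcard]
    _ ≤ _ := card_le_coverNum S hsub hsep

end AuxCount
section AuxCountAA

open Filter Metric Set Pointwise

variable {p : ℝ≥0∞} [Fact (1 ≤ p)] {α : ℕ → ℝ}

lemma coverAA_upper (hpos : ∀ n, 0 < α n) (hdec : Antitone α)
    (hlim : Tendsto α atTop (nhds 0)) {ε : ℝ} (hε : 0 < ε) :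
    coverNum ((Set.range fun n : ℕ => (lp.single p n (α n) : lp (fun _ : ℕ => ℝ) p)) -
        (Set.range fun n : ℕ => (lp.single p n (α n) : lp (fun _ : ℕ => ℝ) p))) ε
      ≤ (((sInf {m | α m < ε / 4} + 1) ^ 2 : ℕ) : ℕ∞) := by
  classical
  set e : ℕ → lp (fun _ : ℕ => ℝ) p := fun n => lp.single p n (α n) with he
  set m₀ : ℕ := sInf {m | α m < ε / 4} with hm₀
  have hα₀ : α m₀ < ε / 4 := mf_lt α hlim (by linarith)
  set F : Finset (lp (fun _ : ℕ => ℝ) p) :=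
    ((Finset.range (m₀ + 1)) ×ˢ (Finset.range (m₀ + 1))).image (fun q => e q.1 - e q.2) with hF
  have h1 : ↑F ⊆ Set.range e - Set.range e := by
    intro x hx
    rw [hF, Finset.coe_image] at hx
    obtain ⟨⟨n, m⟩, _, rfl⟩ := hx
    exact Set.sub_mem_sub ⟨n, rfl⟩ ⟨m, rfl⟩
  have hkey : ∀ k : ℕ, ‖e k - e (min k m₀)‖ ≤ 2 * α m₀ := by
    intro k
    rcases le_or_gt k m₀ with hk | hk
    · rw [min_eq_left hk, sub_self, norm_zero]
      have := hpos m₀; linarith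
    · rw [min_eq_right hk.le]
      have hle : ‖e k - e m₀‖ ≤ ‖e k‖ + ‖e m₀‖ := norm_sub_le _ _
      rw [he] at hle
      simp only [norm_lp_single, abs_of_pos (hpos _)] at hle
      have : α k ≤ α m₀ := hdec hk.le
      linarith
  have h2 : Set.range e - Set.range e ⊆ ⋃ c ∈ F, Metric.ball c ε := by
    intro x hx
    rw [Set.mem_sub] at hx
    obtain ⟨a, ⟨n, rfl⟩, b, ⟨m, rfl⟩, rfl⟩ := hx
    rw [Set.mem_iUnion₂]
    refine ⟨e (min n m₀) - e (min m m₀), ?_, ?_⟩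
    · rw [hF, Finset.mem_image]
      exact ⟨(min n m₀, min m m₀), Finset.mem_product.2
        ⟨Finset.mem_range.2 (by omega), Finset.mem_range.2 (by omega)⟩, rfl⟩
    · rw [Metric.mem_ball, dist_eq_norm]
      have heq : (e n - e m) - (e (min n m₀) - e (min m m₀))
          = (e n - e (min n m₀)) - (e m - e (min m m₀)) := by abel
      rw [heq]
      calc ‖(e n - e (min n m₀)) - (e m - e (min m m₀))‖
          ≤ ‖e n - e (min n m₀)‖ + ‖e m - e (min m m₀)‖ := norm_sub_le _ _
        _ ≤ 2 * α m₀ + 2 * α m₀ := add_le_add (hkey n) (hkey m)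
        _ < ε := by linarith
  refine (coverNum_le_card F h1 h2).trans ?_
  have : F.card ≤ (m₀ + 1) ^ 2 := by
    refine (Finset.card_image_le).trans ?_
    rw [Finset.card_product, Finset.card_range]
    ring_nf
    omega
  exact_mod_cast this

lemma coverAA_lower (hpos : ∀ n, 0 < α n) {ε : ℝ} (hε : 0 < ε) :
    ((sInf {m | α m < 2 * ε} * sInf {m | α m < 2 * ε} - sInf {m | α m < 2 * ε} : ℕ) : ℕ∞)
      ≤ coverNum ((Set.range fun n : ℕ => (lp.single p n (α n) : lp (fun _ : ℕ => ℝ) p)) -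
          (Set.range fun n : ℕ => (lp.single p n (α n) : lp (fun _ : ℕ => ℝ) p))) ε := by
  classical
  set e : ℕ → lp (fun _ : ℕ => ℝ) p := fun n => lp.single p n (α n) with he
  set m₁ : ℕ := sInf {m | α m < 2 * ε} with hm₁
  have hcoord : ∀ n m k : ℕ, ((e n - e m : lp (fun _ : ℕ => ℝ) p) : ∀ _ : ℕ, ℝ) k
      = (if k = n then α n else 0) - (if k = m then α m else 0) := fun n m k => eseq_coord n m k
  set v : ℕ × ℕ → lp (fun _ : ℕ => ℝ) p := fun q => e q.1 - e q.2 with hv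
  set S : Finset (lp (fun _ : ℕ => ℝ) p) := ((Finset.range m₁).offDiag).image v with hS
  have hsub : ↑S ⊆ Set.range e - Set.range e := by
    intro x hx
    rw [hS, Finset.coe_image] at hx
    obtain ⟨⟨n, m⟩, _, rfl⟩ := hx
    exact Set.sub_mem_sub ⟨n, rfl⟩ ⟨m, rfl⟩
  have hinj : Set.InjOn v ((Finset.range m₁).offDiag : Set (ℕ × ℕ)) := by
    rintro ⟨n, m⟩ hq ⟨n', m'⟩ hq' hvv
    rw [Finset.mem_coe, Finset.mem_offDiag] at hq hq'
    have hnm : n ≠ m := hq.2.2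
    have hnm' : n' ≠ m' := hq'.2.2
    have hvv' : (e n - e m : lp (fun _ : ℕ => ℝ) p) = e n' - e m' := hvv
    have hn : ∀ k, ((e n - e m : lp (fun _ : ℕ => ℝ) p) : ∀ _ : ℕ, ℝ) k
        = ((e n' - e m' : lp (fun _ : ℕ => ℝ) p) : ∀ _ : ℕ, ℝ) k := fun k => by rw [hvv']
    have h1 := hn n
    rw [hcoord, hcoord, if_pos rfl, if_neg hnm] at h1
    have hnn' : n = n' := by
      by_contra hne
      rw [if_neg hne] at h1
      rcases eq_or_ne n m' with h2 | h2
      · rw [if_pos h2] at h1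
        have := hpos n; have := hpos m'; linarith
      · rw [if_neg h2] at h1
        have := hpos n; linarith
    have h2 := hn m
    rw [hcoord, hcoord, if_neg (Ne.symm hnm), if_pos rfl,
      if_neg (fun h : m = n' => hnm ((h.trans hnn'.symm)).symm)] at h2
    have hmm' : m = m' := by
      by_contra hne
      rw [if_neg hne] at h2
      have := hpos m; linarith
    rw [Prod.mk.injEq]
    exact ⟨hnn', hmm'⟩
  have hsep : ∀ x ∈ S, ∀ y ∈ S, x ≠ y → 2 * ε ≤ dist x y := by
    intro x hx y hy hxy
    rw [hS, Finset.mem_image] at hx hy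
    obtain ⟨⟨n, m⟩, hq, rfl⟩ := hx
    obtain ⟨⟨n', m'⟩, hq', rfl⟩ := hy
    rw [Finset.mem_offDiag] at hq hq'
    obtain ⟨hn1, hm1, hnm⟩ := hq
    obtain ⟨hn1', hm1', hnm'⟩ := hq'
    rw [Finset.mem_range] at hn1 hm1 hn1' hm1'
    have hge : ∀ k, k < m₁ → 2 * ε ≤ α k := fun k hk => mf_ge α hk
    have hdd : dist (v (n, m)) (v (n', m'))
        = dist (e n - e m : lp (fun _ : ℕ => ℝ) p) (e n' - e m') := rfl
    rw [hdd]
    rcases eq_or_ne n n' with hnn | hne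
    · have hmm : m ≠ m' := by
        intro h
        exact hxy (by rw [hv]; simp only [hnn, h])
      have hco := abs_apply_le_dist p (e n - e m : lp (fun _ : ℕ => ℝ) p) (e n' - e m') m
      rw [hcoord, hcoord, if_neg (Ne.symm hnm), if_pos rfl,
        if_neg (fun h : m = n' => hnm ((h.trans hnn.symm)).symm), if_neg hmm] at hco
      rw [show (0 : ℝ) - α m - (0 - 0) = -α m by ring, abs_neg, abs_of_pos (hpos m)] at hco
      exact le_trans (hge m hm1) hco
    · have hco := abs_apply_le_dist p (e n - e m : lp (fun _ : ℕ => ℝ) p) (e n' - e m') n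
      rw [hcoord, hcoord, if_pos rfl, if_neg hnm, if_neg hne] at hco
      rcases eq_or_ne n m' with h2 | h2
      · rw [if_pos h2] at hco
        rw [show α n - 0 - (0 - α m') = α n + α m' by ring] at hco
        rw [abs_of_pos (by have := hpos n; have := hpos m'; linarith)] at hco
        have := hge n hn1
        have := hpos m'
        linarith
      · rw [if_neg h2] at hco
        rw [show α n - 0 - (0 - 0) = α n by ring, abs_of_pos (hpos n)] at hco
        exact le_trans (hge n hn1) hco
  have hcard : S.card = m₁ * m₁ - m₁ := by
    rw [hS, Finset.card_image_of_injOn hinj, Finset.offDiag_card, Finset.card_range]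
  calc ((m₁ * m₁ - m₁ : ℕ) : ℕ∞) = (S.card : ℕ∞) := by rw [hcard]
    _ ≤ _ := card_le_coverNum S hsub hsep

end AuxCountAA
section AuxAnalytic

open Filter Metric Set Topology

lemma ev_small (P : ℝ → Prop) :
    (∀ᶠ ε in 𝓝[>] (0:ℝ), P ε) ↔ ∃ a : ℝ, 0 < a ∧ ∀ ε : ℝ, 0 < ε → ε < a → P ε := by
  rw [(nhdsGT_basis (0:ℝ)).eventually_iff]
  constructor
  · rintro ⟨a, ha, h⟩
    exact ⟨a, ha, fun ε h1 h2 => h (Set.mem_Ioo.2 ⟨h1, h2⟩)⟩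
  · rintro ⟨a, ha, h⟩
    exact ⟨a, ha, fun ε hε => h ε (Set.mem_Ioo.1 hε).1 (Set.mem_Ioo.1 hε).2⟩

lemma freq_small (P : ℝ → Prop) :
    (∃ᶠ ε in 𝓝[>] (0:ℝ), P ε) ↔ ∀ a : ℝ, 0 < a → ∃ ε : ℝ, 0 < ε ∧ ε < a ∧ P ε := by
  rw [(nhdsGT_basis (0:ℝ)).frequently_iff]
  constructor
  · intro h a ha
    obtain ⟨ε, hε, hP⟩ := h a ha
    exact ⟨ε, (Set.mem_Ioo.1 hε).1, (Set.mem_Ioo.1 hε).2, hP⟩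
  · intro h a ha
    obtain ⟨ε, h1, h2, hP⟩ := h a ha
    exact ⟨ε, Set.mem_Ioo.2 ⟨h1, h2⟩, hP⟩

lemma EReal_div_lt {x : EReal} {l s : ℝ} (hl : 0 < l)
    (h : x / (l : EReal) < (s : EReal)) : x < ((s * l : ℝ) : EReal) := by
  by_contra hc
  push_neg at hc
  have h2 : (s : EReal) ≤ x / (l : EReal) := by
    rw [EReal.le_div_iff_mul_le (by exact_mod_cast hl) (by simp)]
    rw [← EReal.coe_mul]
    exact hc
  exact absurd h2 (not_le.2 h)

lemma EReal_le_div {x : EReal} {l s : ℝ} (hl : 0 < l)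
    (h : ((s * l : ℝ) : EReal) ≤ x) : (s : EReal) ≤ x / (l : EReal) := by
  rw [EReal.le_div_iff_mul_le (by exact_mod_cast hl) (by simp), ← EReal.coe_mul]
  exact h

lemma EReal_div_le_div {x : EReal} {l c : ℝ} (hl : 0 ≤ l) (h : x ≤ ((c : ℝ) : EReal)) :
    x / (l : EReal) ≤ ((c / l : ℝ) : EReal) := by
  rw [EReal.coe_div]
  exact EReal.div_le_div_right_of_nonneg (by exact_mod_cast hl) h

lemma EReal_div_ge_div {x : EReal} {l c : ℝ} (hl : 0 ≤ l) (h : ((c : ℝ) : EReal) ≤ x) :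
    ((c / l : ℝ) : EReal) ≤ x / (l : EReal) := by
  rw [EReal.coe_div]
  exact EReal.div_le_div_right_of_nonneg (by exact_mod_cast hl) h

lemma dimBox_nonneg {E : Type*} [SeminormedAddCommGroup E] {X : Set E} (hX : X.Nonempty) :
    0 ≤ dimBox X := by
  refine le_limsup_of_frequently_le ?_
  refine ((ev_small _).2 ⟨1, one_pos, fun ε h1 h2 => ?_⟩).frequently
  exact EReal.div_nonneg (elog_nonneg (one_le_coverNum hX ε))
    (by rw [EReal.coe_nonneg]; nlinarith [Real.log_neg h1 h2])

lemma tendsto_neg_log : Tendsto (fun ε : ℝ => -Real.log ε) (𝓝[>] (0:ℝ)) atTop :=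
  tendsto_neg_atBot_atTop.comp Real.tendsto_log_nhdsGT_zero

lemma neg_log_pos {ε : ℝ} (h1 : 0 < ε) (h2 : ε < 1) : 0 < -Real.log ε :=
  neg_pos.2 (Real.log_neg h1 h2)

end AuxAnalytic
section KeyParts

open Filter Metric Set Pointwise Topology

variable {p : ℝ≥0∞} [Fact (1 ≤ p)] {α : ℕ → ℝ}

lemma keyI (hpos : ∀ n, 0 < α n) (hdec : Antitone α)
    (hlim : Tendsto α atTop (nhds 0)) {s : ℝ} (hs0 : 0 < s)
    (hs : dimBox (Set.range fun n : ℕ => (lp.single p n (α n) : lp (fun _ : ℕ => ℝ) p))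
      < (s : EReal)) :
    dimBox ((Set.range fun n : ℕ => (lp.single p n (α n) : lp (fun _ : ℕ => ℝ) p)) -
        (Set.range fun n : ℕ => (lp.single p n (α n) : lp (fun _ : ℕ => ℝ) p)))
      ≤ ((2 * s : ℝ) : EReal) := by
  classical
  set A : Set (lp (fun _ : ℕ => ℝ) p) :=
    Set.range fun n : ℕ => (lp.single p n (α n) : lp (fun _ : ℕ => ℝ) p) with hA
  have hs' : Filter.limsup
      (fun ε : ℝ => elog (coverNum A ε) / ((-Real.log ε : ℝ) : EReal)) (𝓝[>] 0)
      < (s : EReal) := hs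
  have hev : ∀ᶠ ε in 𝓝[>] (0:ℝ),
      elog (coverNum A ε) / ((-Real.log ε : ℝ) : EReal) < (s : EReal) :=
    eventually_lt_of_limsup_lt hs'
  obtain ⟨a, ha0, hP⟩ := (ev_small _).1 (hev.and ((ev_small _).2 ⟨1, one_pos,
    fun ε h1 h2 => h2⟩))
  have hm : ∀ ε : ℝ, 0 < ε → ε < a →
      ((sInf {m | α m < 2*ε} : ℕ) : ℝ) ≤ Real.exp (s * (-Real.log ε)) := by
    intro ε h1 h2
    obtain ⟨hlt, hε1⟩ := hP ε h1 h2
    have hl : 0 < -Real.log ε := neg_log_pos h1 hε1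
    have h3 : elog (coverNum A ε) < ((s * (-Real.log ε) : ℝ) : EReal) := EReal_div_lt hl hlt
    have hfin : coverNum A ε ≠ ⊤ := by
      intro h
      rw [h] at h3
      revert h3
      rw [elog]
      simp
    have hk : elog (coverNum A ε) = ((Real.log (coverNum A ε).toNat : ℝ) : EReal) := by
      conv_lhs => rw [← ENat.coe_toNat hfin]
      rw [elog_coe_nat]
    rw [hk, EReal.coe_lt_coe_iff] at h3
    have hmk : ((sInf {m | α m < 2*ε} : ℕ) : ℕ∞) ≤ ((coverNum A ε).toNat : ℕ∞) := by
      rw [ENat.coe_toNat hfin]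
      exact coverA_lower hpos
    have hmk' : (sInf {m | α m < 2*ε} : ℕ) ≤ (coverNum A ε).toNat := by exact_mod_cast hmk
    rcases Nat.eq_zero_or_pos (coverNum A ε).toNat with h0 | h0
    · have hz : sInf {m | α m < 2*ε} = 0 := by
        have := hmk'
        rw [h0] at this
        omega
      rw [hz]
      simpa using (Real.exp_pos _).le
    · have hklt : ((coverNum A ε).toNat : ℝ) < Real.exp (s * (-Real.log ε)) :=
        (Real.log_lt_iff_lt_exp (by exact_mod_cast h0)).1 h3
      calc ((sInf {m | α m < 2*ε} : ℕ) : ℝ) ≤ ((coverNum A ε).toNat : ℝ) := by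
            exact_mod_cast hmk'
        _ ≤ _ := hklt.le
  set c₀ : ℝ := Real.log 4 + 2*s*Real.log 8 with hc₀
  have hAA : ∀ᶠ ε in 𝓝[>] (0:ℝ),
      elog (coverNum (A - A) ε) / ((-Real.log ε : ℝ) : EReal)
        ≤ (((c₀ + 2*s*(-Real.log ε)) / (-Real.log ε) : ℝ) : EReal) := by
    refine (ev_small _).2 ⟨min (4*a) 1, by positivity, fun ε h1 h2 => ?_⟩
    have hε1 : ε < 1 := lt_of_lt_of_le h2 (min_le_right _ _)
    have hεa : ε < 4*a := lt_of_lt_of_le h2 (min_le_left _ _)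
    have hl : 0 < -Real.log ε := neg_log_pos h1 hε1
    set m₀ : ℕ := sInf {m | α m < ε/4} with hm₀
    have hm₀bound : (m₀ : ℝ) ≤ Real.exp (s * (Real.log 8 - Real.log ε)) := by
      have h := hm (ε/8) (by positivity) (by linarith)
      rw [show 2*(ε/8) = ε/4 by ring] at h
      rw [show -Real.log (ε/8) = Real.log 8 - Real.log ε by
        rw [Real.log_div (ne_of_gt h1) (by norm_num)]; ring] at h
      exact h
    set B := Real.exp (s * (Real.log 8 - Real.log ε)) with hB
    have hB1 : 1 ≤ B := Real.one_le_exp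
      (by nlinarith [Real.log_neg h1 hε1, Real.log_pos (show (1:ℝ) < 8 by norm_num)])
    have hsq : (((m₀+1)^2 : ℕ) : ℝ) ≤ 4*B^2 := by
      have hb : ((m₀:ℝ)+1) ≤ 2*B := by linarith
      have h0' : (0:ℝ) ≤ (m₀:ℝ)+1 := by positivity
      calc (((m₀+1)^2 : ℕ) : ℝ) = ((m₀:ℝ)+1)^2 := by push_cast; ring
        _ ≤ (2*B)^2 := by nlinarith
        _ = 4*B^2 := by ring
    have hcov := coverAA_upper (p := p) hpos hdec hlim h1
    have helog : elog (coverNum (A - A) ε) ≤ ((Real.log (4*B^2) : ℝ) : EReal) := by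
      refine le_trans (elog_mono hcov) ?_
      rw [elog_coe_nat, EReal.coe_le_coe_iff]
      have hpos2 : (0:ℝ) < (((m₀+1)^2 : ℕ) : ℝ) := by
        have : 0 < ((m₀+1)^2 : ℕ) := by positivity
        exact_mod_cast this
      exact Real.log_le_log hpos2 hsq
    have hlogeq : Real.log (4*B^2) = c₀ + 2*s*(-Real.log ε) := by
      rw [Real.log_mul (by norm_num) (by positivity), show B^2 = B^(2:ℕ) by norm_num,
        Real.log_pow, hB, Real.log_exp, hc₀]
      push_cast
      ring
    rw [hlogeq] at helog
    exact EReal_div_le_div hl.le helog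
  have htends : Tendsto (fun ε : ℝ => (c₀ + 2*s*(-Real.log ε)) / (-Real.log ε))
      (𝓝[>] (0:ℝ)) (𝓝 (2*s)) := by
    have h1 : Tendsto (fun ε : ℝ => c₀ * (fun ε : ℝ => -Real.log ε)⁻¹ ε + 2*s)
        (𝓝[>] (0:ℝ)) (𝓝 (c₀ * 0 + 2*s)) :=
      ((tendsto_neg_log.inv_tendsto_atTop).const_mul c₀).add_const _
    rw [mul_zero, zero_add] at h1
    refine Tendsto.congr' ?_ h1
    refine (ev_small _).2 ⟨1, one_pos, fun ε h1' h2' => ?_⟩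
    have hl : 0 < -Real.log ε := neg_log_pos h1' h2'
    simp only [Pi.inv_apply]
    have hne : Real.log ε ≠ 0 := by intro h; rw [h] at hl; simp at hl
    field_simp
    ring
  have hlim2 : Filter.limsup
      (fun ε : ℝ => (((c₀ + 2*s*(-Real.log ε)) / (-Real.log ε) : ℝ) : EReal))
      (𝓝[>] (0:ℝ)) = ((2*s : ℝ) : EReal) := (EReal.tendsto_coe.2 htends).limsup_eq
  exact (limsup_le_limsup hAA).trans (le_of_eq hlim2)
lemma keyII (hpos : ∀ n, 0 < α n) (hdec : Antitone α)
    (hlim : Tendsto α atTop (nhds 0)) {s : ℝ} (hs0 : 0 < s)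
    (hs : (s : EReal) < dimBox
      (Set.range fun n : ℕ => (lp.single p n (α n) : lp (fun _ : ℕ => ℝ) p))) :
    ((2 * s : ℝ) : EReal)
      ≤ dimBox ((Set.range fun n : ℕ => (lp.single p n (α n) : lp (fun _ : ℕ => ℝ) p)) -
          (Set.range fun n : ℕ => (lp.single p n (α n) : lp (fun _ : ℕ => ℝ) p))) := by
  classical
  set A : Set (lp (fun _ : ℕ => ℝ) p) :=
    Set.range fun n : ℕ => (lp.single p n (α n) : lp (fun _ : ℕ => ℝ) p) with hA
  have hs' : (s : EReal) < Filter.limsup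
      (fun ε : ℝ => elog (coverNum A ε) / ((-Real.log ε : ℝ) : EReal)) (𝓝[>] 0) := hs
  have hfreq : ∃ᶠ ε in 𝓝[>] (0:ℝ),
      (s : EReal) < elog (coverNum A ε) / ((-Real.log ε : ℝ) : EReal) :=
    frequently_lt_of_lt_limsup (by isBoundedDefault) hs'
  set b₀ : ℝ := Real.exp (-(Real.log 3)/s) with hb₀
  set c₁ : ℝ := Real.log (2/9) - 2*s*Real.log 4 with hc₁
  have hfreqAA : ∀ a : ℝ, 0 < a → ∃ δ : ℝ, 0 < δ ∧ δ < a ∧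
      (((2*s*(-Real.log δ) + c₁) / (-Real.log δ) : ℝ) : EReal)
        ≤ elog (coverNum (A - A) δ) / ((-Real.log δ : ℝ) : EReal) := by
    intro a ha
    have hev_a : ∀ᶠ ε in 𝓝[>] (0:ℝ), 0 < ε ∧ ε < 1 ∧ ε < b₀ ∧ ε < 4*a :=
      (ev_small _).2 ⟨min 1 (min b₀ (4*a)), by positivity, fun ε h1 h2 =>
        ⟨h1, h2.trans_le (min_le_left _ _),
          h2.trans_le ((min_le_right _ _).trans (min_le_left _ _)),
          h2.trans_le ((min_le_right _ _).trans (min_le_right _ _))⟩⟩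
    obtain ⟨ε, hfA, h0, h1, hb, h4a⟩ := (hfreq.and_eventually hev_a).exists
    set l : ℝ := -Real.log ε with hl'
    have hl : 0 < l := neg_log_pos h0 h1
    have hsl : Real.log 3 < s * l := by
      have hlog : Real.log ε < -(Real.log 3)/s := by
        have h2 := Real.log_lt_log h0 hb
        rwa [hb₀, Real.log_exp] at h2
      have h3 : Real.log 3 / s < l := by
        rw [hl']
        rw [neg_div] at hlog
        linarith
      have := (div_lt_iff₀ hs0).1 h3
      linarith
    have hE3 : (3:ℝ) < Real.exp (s*l) := by
      calc (3:ℝ) = Real.exp (Real.log 3) := (Real.exp_log (by norm_num)).symm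
        _ < _ := Real.exp_lt_exp.2 hsl
    have hfA' : ((s*l : ℝ) : EReal) ≤ elog (coverNum A ε) := by
      have h2 := (EReal.le_div_iff_mul_le (by exact_mod_cast hl : (0:EReal) < (l:ℝ))
        (by simp)).1 hfA.le
      rwa [← EReal.coe_mul] at h2
    set M : ℕ := sInf {m | α m < ε/2} with hM
    have hcovA : coverNum A ε ≤ ((M + 1 : ℕ) : ℕ∞) := coverA_upper (p := p) hpos hdec hlim h0
    have hMe : Real.exp (s*l) ≤ (M:ℝ) + 1 := by
      have h5 : ((s*l : ℝ) : EReal) ≤ ((Real.log ((M+1 : ℕ)) : ℝ) : EReal) :=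
        le_trans hfA' (by rw [← elog_coe_nat]; exact elog_mono hcovA)
      rw [EReal.coe_le_coe_iff] at h5
      have hm1 : (0:ℝ) < ((M+1 : ℕ) : ℝ) := by positivity
      have h6 := Real.exp_le_exp.2 h5
      rw [Real.exp_log hm1] at h6
      calc Real.exp (s*l) ≤ ((M+1 : ℕ) : ℝ) := h6
        _ = (M:ℝ) + 1 := by push_cast; ring
    set Ex : ℝ := Real.exp (s*l) with hEx
    have hM2 : (2:ℝ) ≤ (M:ℝ) := by linarith
    have hMM : M ≤ M*M := by nlinarith [show (2:ℕ) ≤ M by exact_mod_cast hM2]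
    have hK : ((M*M - M : ℕ) : ℝ) = (M:ℝ)*(M:ℝ) - (M:ℝ) := by
      push_cast [Nat.cast_sub hMM]
      ring
    have hMge : Ex - 1 ≤ (M:ℝ) := by linarith
    have h9 : (2/9)*Ex^2 ≤ (Ex-1)*(Ex-2) := by nlinarith [sq_nonneg (Ex-3)]
    have h10 : (Ex-1)*(Ex-2) ≤ (M:ℝ)*((M:ℝ)-1) := by nlinarith
    have hKge : (2/9) * Ex^2 ≤ ((M*M - M : ℕ) : ℝ) := by
      rw [hK]; nlinarith
    refine ⟨ε/4, by positivity, by linarith, ?_⟩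
    have hδl : -Real.log (ε/4) = l + Real.log 4 := by
      rw [Real.log_div (ne_of_gt h0) (by norm_num), hl']
      ring
    have hcovAA : ((M*M - M : ℕ) : ℕ∞) ≤ coverNum (A - A) (ε/4) := by
      have h6 := coverAA_lower (p := p) hpos (show (0:ℝ) < ε/4 by positivity)
      rw [show 2*(ε/4) = ε/2 by ring] at h6
      exact h6
    have helogAA : ((Real.log ((2/9)*Ex^2) : ℝ) : EReal)
        ≤ elog (coverNum (A - A) (ε/4)) := by
      refine le_trans ?_ (elog_mono hcovAA)
      rw [elog_coe_nat, EReal.coe_le_coe_iff]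
      exact Real.log_le_log (by positivity) hKge
    have hlogeq : Real.log ((2/9)*Ex^2) = 2*s*(-Real.log (ε/4)) + c₁ := by
      rw [Real.log_mul (by norm_num) (by positivity), show Ex^2 = Ex^(2:ℕ) by norm_num,
        Real.log_pow, hEx, Real.log_exp, hδl, hc₁]
      push_cast
      ring
    rw [hlogeq] at helogAA
    have hlδ : (0:ℝ) ≤ -Real.log (ε/4) := by
      rw [hδl]
      have : (0:ℝ) < Real.log 4 := Real.log_pos (by norm_num)
      linarith
    exact EReal_div_ge_div hlδ helogAA
  have hr : ∀ r : ℝ, r < 2*s → (r : EReal) ≤ dimBox (A - A) := by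
    intro r hrs
    have htends : Tendsto (fun δ : ℝ => (2*s*(-Real.log δ) + c₁) / (-Real.log δ))
        (𝓝[>] (0:ℝ)) (𝓝 (2*s)) := by
      have h1 : Tendsto (fun δ : ℝ => c₁ * (fun δ : ℝ => -Real.log δ)⁻¹ δ + 2*s)
          (𝓝[>] (0:ℝ)) (𝓝 (c₁ * 0 + 2*s)) :=
        ((tendsto_neg_log.inv_tendsto_atTop).const_mul c₁).add_const _
      rw [mul_zero, zero_add] at h1
      refine Tendsto.congr' ?_ h1
      refine (ev_small _).2 ⟨1, one_pos, fun δ h1' h2' => ?_⟩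
      have hl : 0 < -Real.log δ := neg_log_pos h1' h2'
      simp only [Pi.inv_apply]
      have hne : Real.log δ ≠ 0 := by intro h; rw [h] at hl; simp at hl
      field_simp
      ring
    have hevr : ∀ᶠ δ in 𝓝[>] (0:ℝ), r < (2*s*(-Real.log δ) + c₁) / (-Real.log δ) :=
      htends.eventually_const_lt hrs
    have hfr2 : ∃ᶠ δ in 𝓝[>] (0:ℝ),
        (r : EReal) ≤ elog (coverNum (A - A) δ) / ((-Real.log δ : ℝ) : EReal) := by
      refine (((freq_small _).2 hfreqAA).and_eventually hevr).mono ?_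
      rintro δ ⟨h7, h8⟩
      exact le_trans (le_of_lt (EReal.coe_lt_coe_iff.2 h8)) h7
    exact le_limsup_of_frequently_le hfr2
  by_contra hc
  push_neg at hc
  obtain ⟨t, ht1, ht2⟩ := EReal.exists_between_coe_real hc
  exact absurd (hr t (by exact_mod_cast ht2)) (not_le.2 ht1)

end KeyParts

/-- for the `orthogonal' sequence `A = {α_n e_n} ⊂ ℓ_p`,
`d_B(A - A) = 2 d_B(A)`. -/
theorem dimBox_sub_orthogonal_seq (p : ℝ≥0∞) [Fact (1 ≤ p)]
    (α : ℕ → ℝ) (hpos : ∀ n, 0 < α n) (hdec : Antitone α)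
    (hlim : Tendsto α atTop (𝓝 0)) :
    dimBox ((Set.range fun n : ℕ => (lp.single p n (α n) : lp (fun _ : ℕ => ℝ) p)) -
            (Set.range fun n : ℕ => (lp.single p n (α n) : lp (fun _ : ℕ => ℝ) p)))
      = 2 * dimBox (Set.range fun n : ℕ => (lp.single p n (α n) : lp (fun _ : ℕ => ℝ) p)) := by
    classical
  set A : Set (lp (fun _ : ℕ => ℝ) p) :=
    Set.range fun n : ℕ => (lp.single p n (α n) : lp (fun _ : ℕ => ℝ) p) with hA
  have hAne : A.Nonempty := ⟨_, 0, rfl⟩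
  have hAAne : (A - A).Nonempty := ⟨_, Set.sub_mem_sub ⟨0, rfl⟩ ⟨0, rfl⟩⟩
  have hD0 : 0 ≤ dimBox A := dimBox_nonneg hAne
  have hX0 : 0 ≤ dimBox (A - A) := dimBox_nonneg hAAne
  refine le_antisymm ?_ ?_
  · rcases eq_or_ne (dimBox A) ⊤ with htop | hne
    · rw [htop, EReal.mul_top_of_pos (by norm_num)]
      exact le_top
    · have hnb : dimBox A ≠ ⊥ := fun h => by simp [h] at hD0
      set d : ℝ := (dimBox A).toReal with hd
      have hdd : dimBox A = (d : EReal) := (EReal.coe_toReal hne hnb).symm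
      have hd0 : 0 ≤ d := by
        rw [hdd] at hD0
        exact_mod_cast hD0
      by_contra hc
      push_neg at hc
      have h2d : (((2*d : ℝ)) : EReal) < dimBox (A - A) := by
        rw [hdd] at hc
        calc (((2*d : ℝ)) : EReal) = 2 * (d : EReal) := by norm_cast
          _ < _ := hc
      obtain ⟨r, hr1, hr2⟩ := EReal.exists_between_coe_real h2d
      have hrd : 2*d < r := by exact_mod_cast hr1
      have hs : dimBox A < ((r/2 : ℝ) : EReal) := by
        rw [hdd, EReal.coe_lt_coe_iff]
        linarith
      have hs0 : 0 < r/2 := by linarith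
      have hkey := keyI hpos hdec hlim hs0 hs
      rw [show 2*(r/2) = r by ring] at hkey
      exact absurd hr2 (not_lt.2 hkey)
  · rcases eq_or_ne (dimBox A) ⊤ with htop | hne
    · rw [htop, EReal.mul_top_of_pos (by norm_num)]
      by_contra hc
      push_neg at hc
      obtain ⟨r, hr1, hr2⟩ := EReal.exists_between_coe_real hc
      set s : ℝ := max r 1 with hsdef
      have hs0 : (0:ℝ) < s := lt_of_lt_of_le one_pos (le_max_right _ _)
      have hsD : (s : EReal) < dimBox A := by
        rw [htop]
        exact EReal.coe_lt_top s
      have h2 := keyII hpos hdec hlim hs0 hsD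
      have h3 : (2*s : ℝ) < r := by exact_mod_cast lt_of_le_of_lt h2 hr1
      have h4 : r ≤ s := le_max_left _ _
      linarith
    · have hnb : dimBox A ≠ ⊥ := fun h => by simp [h] at hD0
      set d : ℝ := (dimBox A).toReal with hd
      have hdd : dimBox A = (d : EReal) := (EReal.coe_toReal hne hnb).symm
      have hd0 : 0 ≤ d := by
        rw [hdd] at hD0
        exact_mod_cast hD0
      rw [hdd, show (2:EReal) * (d : EReal) = ((2*d : ℝ) : EReal) by norm_cast]
      rcases eq_or_lt_of_le hd0 with h0 | hdpos
      · rw [← h0]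
        norm_num
        exact hX0
      · by_contra hc
        push_neg at hc
        obtain ⟨r, hr1, hr2⟩ := EReal.exists_between_coe_real hc
        have hrd : r < 2*d := by exact_mod_cast hr2
        set s : ℝ := max (r/2) (d/2) with hsdef
        have hs0 : 0 < s := lt_of_lt_of_le (by linarith) (le_max_right _ _)
        have hsd : s < d := max_lt (by linarith) (by linarith)
        have hsD : (s : EReal) < dimBox A := by
          rw [hdd]
          exact_mod_cast hsd
        have h2 := keyII hpos hdec hlim hs0 hsD
        have hr2s : r ≤ 2*s := by
          have : r/2 ≤ s := le_max_left _ _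
          linarith
        have h5 : ((r : ℝ) : EReal) ≤ dimBox (A - A) :=
          le_trans (by exact_mod_cast hr2s) h2
        exact absurd hr1 (not_lt.2 h5)
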